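/- Let s : ℝ → ℝ be a softplus-type function, i.e., s(x) ≥ max(0, x) for all x, s is convex, and |s(x) − max(0, x)| → 0 as |x| → ∞. Then the rescaled functions uniformly approximate the ReLU function: sup_{x ∈ ℝ} |s(a x)/a − max(0, x)| → 0 as a → +∞. -/

import Mathlib

open MeasureTheory Filter Topology Set

/-- A softplus-type function `s` (`s ≥ ReLU`, `s` convex, `|s − ReLU| → 0` at `±∞`) uniformly
approximates ReLU after rescaling: `sup_x |s(ax)/a − max(0, x)| → 0` as `a → +∞`. -/
theorem softplus_type_rescaled_uniformly_approximates_relu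
    (s : ℝ → ℝ)
    (hge : ∀ x, max 0 x ≤ s x)
    (hconv : ConvexOn ℝ univ s)
    (htop : Tendsto (fun x => |s x - max 0 x|) atTop (𝓝 0))
    (hbot : Tendsto (fun x => |s x - max 0 x|) atBot (𝓝 0)) :
    ∀ ε > 0, ∃ A : ℝ, ∀ a ≥ A, ∀ x : ℝ, |s (a * x) / a - max 0 x| ≤ ε := by
  intro ε hε
  -- extract bounds at ±∞
  obtain ⟨B1, hB1⟩ := (eventually_atTop.mp (htop.eventually (gt_mem_nhds one_pos)))
  obtain ⟨B2, hB2⟩ := (eventually_atBot.mp (hbot.eventually (gt_mem_nhds one_pos)))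
  set C : ℝ := max B1 (-B2) with hC
  -- global bound M on s - relu
  set M : ℝ := max 1 (max (s (-C)) (s C)) with hM
  have hM1 : (1 : ℝ) ≤ M := le_max_left _ _
  have hMpos : 0 < M := lt_of_lt_of_le one_pos hM1
  have hbound : ∀ y : ℝ, s y - max 0 y ≤ M := by
    intro y
    rcases le_or_gt y (-C) with h | h
    · have : |s y - max 0 y| < 1 := hB2 y (h.trans (by have := le_max_right B1 (-B2); simp only [hC]; linarith))
      calc s y - max 0 y ≤ |s y - max 0 y| := le_abs_self _
        _ ≤ 1 := this.le
        _ ≤ M := hM1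
    · rcases le_or_gt C y with h2 | h2
      · have : |s y - max 0 y| < 1 := hB1 y ((le_max_left B1 (-B2)).trans h2)
        calc s y - max 0 y ≤ |s y - max 0 y| := le_abs_self _
          _ ≤ 1 := this.le
          _ ≤ M := hM1
      · -- y ∈ (-C, C): use convexity
        have hseg : y ∈ segment ℝ (-C) C := by
          rw [segment_eq_Icc (by linarith)]
          exact ⟨h.le, h2.le⟩
        have := hconv.le_on_segment (mem_univ (-C)) (mem_univ C) hseg
        have h0 : 0 ≤ max 0 y := le_max_left _ _
        calc s y - max 0 y ≤ s y := by linarith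
          _ ≤ max (s (-C)) (s C) := this
          _ ≤ M := le_max_right _ _
  refine ⟨M / ε, fun a ha x => ?_⟩
  have hA : 0 < M / ε := div_pos hMpos hε
  have hapos : 0 < a := lt_of_lt_of_le hA ha
  have hrelu : max 0 (a * x) = a * max 0 x := by
    rcases le_or_gt x 0 with hx | hx
    · rw [max_eq_left (by nlinarith), max_eq_left hx, mul_zero]
    · rw [max_eq_right (by nlinarith), max_eq_right hx.le]
  have hnn : 0 ≤ s (a * x) / a - max 0 x := by
    have := hge (a * x)
    rw [hrelu] at this
    rw [sub_nonneg, le_div_iff₀ hapos]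
    linarith [mul_comm a (max 0 x)]
  rw [abs_of_nonneg hnn]
  have hb := hbound (a * x)
  rw [hrelu] at hb
  rw [div_sub' hapos.ne', div_le_iff₀ hapos]
  have ha' : M / ε ≤ a := ha
  rw [div_le_iff₀ hε] at ha'
  nlinarith [mul_comm a (max 0 x), mul_comm a ε]
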